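/- arXiv:2603.28748 — 2 statements merged into one kernel-verified Lean document; each statement's English description precedes it below -/
import Mathlib

section
/- Let G and H be graphs with odd Hadwiger numbers oh(G) = s ≥ 2 and oh(H) = t ≥ 2. Then the odd Hadwiger number of the lexicographic product satisfies oh(G ∘ H) ≥ s·t. -/
open SimpleGraph

/-- `H` is an odd minor of `G`: there are pairwise vertex-disjoint subtrees of `G`, one for
each vertex of `H`, and a 2-colouring of the vertices which is proper on each tree, such that
for every edge of `H` there is a monochromatic edge of `G` between the corresponding trees. -/
def IsOddMinorOf {W V : Type*} (H : SimpleGraph W) (G : SimpleGraph V) : Prop :=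
  ∃ (T : W → G.Subgraph) (c : V → Fin 2),
    (∀ w, (T w).coe.IsTree) ∧
    (Pairwise fun w w' => Disjoint (T w).verts (T w').verts) ∧
    (∀ w, ∀ x y, (T w).Adj x y → c x ≠ c y) ∧
    (∀ w w', H.Adj w w' →
      ∃ x y, x ∈ (T w).verts ∧ y ∈ (T w').verts ∧ G.Adj x y ∧ c x = c y)

/-- The odd Hadwiger number of `G`: the largest `r` such that `K_r` is an odd minor of `G`. -/
noncomputable def oddHadwiger {V : Type*} [Fintype V] (G : SimpleGraph V) : ℕ :=
  sSup {r : ℕ | IsOddMinorOf (⊤ : SimpleGraph (Fin r)) G}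

/-- The Cartesian product `G □ H`. -/
def cartProd {α β : Type*} (G : SimpleGraph α) (H : SimpleGraph β) : SimpleGraph (α × β) where
  Adj x y := (x.1 = y.1 ∧ H.Adj x.2 y.2) ∨ (x.2 = y.2 ∧ G.Adj x.1 y.1)
  symm := by
    constructor
    rintro x y (⟨h1, h2⟩ | ⟨h1, h2⟩)
    · exact Or.inl ⟨h1.symm, h2.symm⟩
    · exact Or.inr ⟨h1.symm, h2.symm⟩
  loopless := by
    constructor
    rintro x (⟨_, h⟩ | ⟨_, h⟩)
    · exact H.irrefl h
    · exact G.irrefl h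

/-- The strong product `G ⊠ H`. -/
def strongProd {α β : Type*} (G : SimpleGraph α) (H : SimpleGraph β) : SimpleGraph (α × β) where
  Adj x y := (x.1 = y.1 ∧ H.Adj x.2 y.2) ∨ (x.2 = y.2 ∧ G.Adj x.1 y.1) ∨
    (G.Adj x.1 y.1 ∧ H.Adj x.2 y.2)
  symm := by
    constructor
    rintro x y (⟨h1, h2⟩ | ⟨h1, h2⟩ | ⟨h1, h2⟩)
    · exact Or.inl ⟨h1.symm, h2.symm⟩
    · exact Or.inr (Or.inl ⟨h1.symm, h2.symm⟩)
    · exact Or.inr (Or.inr ⟨h1.symm, h2.symm⟩)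
  loopless := by
    constructor
    rintro x (⟨_, h⟩ | ⟨_, h⟩ | ⟨h, _⟩)
    · exact H.irrefl h
    · exact G.irrefl h
    · exact G.irrefl h

/-- The lexicographic product `G ∘ H`. -/
def lexProd {α β : Type*} (G : SimpleGraph α) (H : SimpleGraph β) : SimpleGraph (α × β) where
  Adj x y := G.Adj x.1 y.1 ∨ (x.1 = y.1 ∧ H.Adj x.2 y.2)
  symm := by
    constructor
    rintro x y (h | ⟨h1, h2⟩)
    · exact Or.inl h.symm
    · exact Or.inr ⟨h1.symm, h2.symm⟩
  loopless := by
    constructor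
    rintro x (h | ⟨_, h⟩)
    · exact G.irrefl h
    · exact H.irrefl h

/-- The direct (tensor) product `G × H`. -/
def dirProd {α β : Type*} (G : SimpleGraph α) (H : SimpleGraph β) : SimpleGraph (α × β) where
  Adj x y := G.Adj x.1 y.1 ∧ H.Adj x.2 y.2
  symm := by
    constructor
    rintro x y ⟨h1, h2⟩
    exact ⟨h1.symm, h2.symm⟩
  loopless := by
    constructor
    rintro x ⟨h, _⟩
    exact G.irrefl h


section AuxOddMinor

open SimpleGraph

private lemma cut_walk' {V : Type*} {G : SimpleGraph V} (f : V → Prop) {v w : V}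
    (hcut : ∀ a b, G.Adj a b → s(a, b) ≠ s(v, w) → (f a ↔ f b))
    {u u' : V} (p : G.Walk u u') : f u → ¬ f u' → s(v, w) ∈ p.edges := by
  induction p with
  | nil => exact fun hfu hfu' => absurd hfu hfu'
  | @cons a b _ h q ih =>
    intro hfu hfu'
    rw [SimpleGraph.Walk.edges_cons, List.mem_cons]
    by_cases he : s(a, b) = s(v, w)
    · exact Or.inl he.symm
    · exact Or.inr (ih ((hcut a b h he).mp hfu) hfu')

/-- The rooted-product branch subgraph of the lexicographic product. -/
private def boxSub {V W : Type*} (G : SimpleGraph V) (H : SimpleGraph W)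
    (A : G.Subgraph) (B : H.Subgraph) (u0 : W) (hu0 : u0 ∈ B.verts) :
    (lexProd G H).Subgraph where
  verts := A.verts ×ˢ B.verts
  Adj a b := (a.1 = b.1 ∧ a.1 ∈ A.verts ∧ B.Adj a.2 b.2) ∨
    (a.2 = u0 ∧ b.2 = u0 ∧ A.Adj a.1 b.1)
  adj_sub := by
    rintro a b (⟨h1, _, h3⟩ | ⟨_, _, h3⟩)
    · exact Or.inr ⟨h1, B.adj_sub h3⟩
    · exact Or.inl (A.adj_sub h3)
  edge_vert := by
    rintro a b (⟨h1, h2, h3⟩ | ⟨h1, _, h3⟩)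
    · exact ⟨h2, B.edge_vert h3⟩
    · exact ⟨A.edge_vert h3, by rw [h1]; exact hu0⟩
  symm := by
    constructor
    rintro a b (⟨h1, h2, h3⟩ | ⟨h1, h2, h3⟩)
    · exact Or.inl ⟨h1.symm, h1 ▸ h2, h3.symm⟩
    · exact Or.inr ⟨h2, h1, h3.symm⟩

private lemma boxSub_adj {V W : Type*} {G : SimpleGraph V} {H : SimpleGraph W}
    {A : G.Subgraph} {B : H.Subgraph} {u0 : W} {hu0 : u0 ∈ B.verts} {a b : V × W} :
    (boxSub G H A B u0 hu0).Adj a b ↔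
      (a.1 = b.1 ∧ a.1 ∈ A.verts ∧ B.Adj a.2 b.2) ∨
      (a.2 = u0 ∧ b.2 = u0 ∧ A.Adj a.1 b.1) := Iff.rfl

private lemma boxSub_connected {V W : Type*} {G : SimpleGraph V} {H : SimpleGraph W}
    {A : G.Subgraph} {B : H.Subgraph} {u0 : W} {hu0 : u0 ∈ B.verts}
    (hA : A.coe.Connected) (hB : B.coe.Connected) :
    (boxSub G H A B u0 hu0).coe.Connected := by
  set U := boxSub G H A B u0 hu0 with hU
  have reach1 : ∀ (x : ↥A.verts) (a b : ↥B.verts),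
      U.coe.Reachable ⟨((x : V), (a : W)), ⟨x.2, a.2⟩⟩ ⟨((x : V), (b : W)), ⟨x.2, b.2⟩⟩ := by
    intro x a b
    exact Reachable.map
      (⟨fun u => ⟨((x : V), (u : W)), ⟨x.2, u.2⟩⟩,
        fun {a b} hab => Or.inl ⟨rfl, x.2, hab⟩⟩ : B.coe →g U.coe)
      (hB.preconnected a b)
  have reach2 : ∀ (x y : ↥A.verts),
      U.coe.Reachable ⟨((x : V), u0), ⟨x.2, hu0⟩⟩ ⟨((y : V), u0), ⟨y.2, hu0⟩⟩ := by
    intro x y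
    exact Reachable.map
      (⟨fun z => ⟨((z : V), u0), ⟨z.2, hu0⟩⟩,
        fun {a b} hab => Or.inr ⟨rfl, rfl, hab⟩⟩ : A.coe →g U.coe)
      (hA.preconnected x y)
  rw [connected_iff]
  constructor
  · intro q r
    have h1 := reach1 ⟨q.1.1, q.2.1⟩ ⟨q.1.2, q.2.2⟩ ⟨u0, hu0⟩
    have h2 := reach2 ⟨q.1.1, q.2.1⟩ ⟨r.1.1, r.2.1⟩
    have h3 := reach1 ⟨r.1.1, r.2.1⟩ ⟨u0, hu0⟩ ⟨r.1.2, r.2.2⟩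
    exact (h1.trans h2).trans h3
  · obtain ⟨x⟩ := hA.nonempty
    exact ⟨⟨((x : V), u0), ⟨x.2, hu0⟩⟩⟩

private lemma boxSub_isTree {V W : Type*} {G : SimpleGraph V} {H : SimpleGraph W}
    {A : G.Subgraph} {B : H.Subgraph} {u0 : W} {hu0 : u0 ∈ B.verts}
    (hA : A.coe.IsTree) (hB : B.coe.IsTree) :
    (boxSub G H A B u0 hu0).coe.IsTree := by
  classical
  set U := boxSub G H A B u0 hu0 with hU
  refine ⟨boxSub_connected hA.isConnected hB.isConnected, ?_⟩
  rw [isAcyclic_iff_forall_adj_isBridge]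
  intro v w hvw
  rw [isBridge_iff_adj_and_forall_walk_mem_edges]
  intro q
  rcases hvw with ⟨h1, h2, h3⟩ | ⟨h1, h2, h3⟩
  · -- vertical edge
    have hSadj : B.coe.Adj ⟨v.1.2, v.2.2⟩ ⟨w.1.2, w.2.2⟩ := h3
    have hbr := (isAcyclic_iff_forall_adj_isBridge.mp hB.IsAcyclic) hSadj
    rw [isBridge_iff] at hbr
    set Sdel := B.coe \ fromEdgeSet {s((⟨v.1.2, v.2.2⟩ : ↥B.verts), ⟨w.1.2, w.2.2⟩)} with hSdel
    refine cut_walk' (fun z => if z.1.1 = v.1.1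
        then Sdel.Reachable ⟨z.1.2, z.2.2⟩ ⟨v.1.2, v.2.2⟩
        else Sdel.Reachable ⟨u0, hu0⟩ ⟨v.1.2, v.2.2⟩) ?_ q ?_ ?_
    · rintro a b (⟨g1, g2, g3⟩ | ⟨g1, g2, g3⟩) hne
      · by_cases hax : a.1.1 = v.1.1
        · have hbx : b.1.1 = v.1.1 := g1 ▸ hax
          have hadj' : Sdel.Adj ⟨a.1.2, a.2.2⟩ ⟨b.1.2, b.2.2⟩ := by
            rw [hSdel, sdiff_adj]
            refine ⟨g3, ?_⟩
            rw [fromEdgeSet_adj]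
            rintro ⟨heq, -⟩
            rw [Set.mem_singleton_iff] at heq
            apply hne
            rw [Sym2.eq_iff] at heq ⊢
            rcases heq with ⟨e1, e2⟩ | ⟨e1, e2⟩
            · exact Or.inl ⟨Subtype.ext (Prod.ext_iff.mpr
                ⟨hax, congrArg Subtype.val e1⟩),
                Subtype.ext (Prod.ext_iff.mpr ⟨hbx.trans h1, congrArg Subtype.val e2⟩)⟩
            · exact Or.inr ⟨Subtype.ext (Prod.ext_iff.mpr
                ⟨hax.trans h1, congrArg Subtype.val e1⟩),
                Subtype.ext (Prod.ext_iff.mpr ⟨hbx, congrArg Subtype.val e2⟩)⟩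
          beta_reduce
          rw [if_pos hax, if_pos hbx]
          exact ⟨fun h => hadj'.symm.reachable.trans h, fun h => hadj'.reachable.trans h⟩
        · have hbx : b.1.1 ≠ v.1.1 := fun h => hax (g1.trans h)
          beta_reduce
          rw [if_neg hax, if_neg hbx]
      · have key : ∀ (z : ↥U.verts), z.1.2 = u0 →
            ((if z.1.1 = v.1.1 then Sdel.Reachable ⟨z.1.2, z.2.2⟩ ⟨v.1.2, v.2.2⟩
              else Sdel.Reachable ⟨u0, hu0⟩ ⟨v.1.2, v.2.2⟩)
              ↔ Sdel.Reachable ⟨u0, hu0⟩ ⟨v.1.2, v.2.2⟩) := by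
          intro z hz
          by_cases h : z.1.1 = v.1.1
          · rw [if_pos h]
            have : (⟨z.1.2, z.2.2⟩ : ↥B.verts) = ⟨u0, hu0⟩ := Subtype.ext hz
            rw [this]
          · rw [if_neg h]
        exact (key a g1).trans (key b g2).symm
    · beta_reduce
      rw [if_pos rfl]
    · beta_reduce
      rw [if_pos h1.symm]
      intro hr
      exact hbr hr.symm
  · -- horizontal edge
    have hTadj : A.coe.Adj ⟨v.1.1, v.2.1⟩ ⟨w.1.1, w.2.1⟩ := h3
    have hbr := (isAcyclic_iff_forall_adj_isBridge.mp hA.IsAcyclic) hTadj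
    rw [isBridge_iff] at hbr
    set Tdel := A.coe \ fromEdgeSet {s((⟨v.1.1, v.2.1⟩ : ↥A.verts), ⟨w.1.1, w.2.1⟩)} with hTdel
    refine cut_walk' (fun z => Tdel.Reachable ⟨z.1.1, z.2.1⟩ ⟨v.1.1, v.2.1⟩) ?_ q ?_ ?_
    · rintro a b (⟨g1, g2, g3⟩ | ⟨g1, g2, g3⟩) hne
      · have : (⟨a.1.1, a.2.1⟩ : ↥A.verts) = ⟨b.1.1, b.2.1⟩ := Subtype.ext g1
        beta_reduce
        rw [this]
      · have hadj' : Tdel.Adj ⟨a.1.1, a.2.1⟩ ⟨b.1.1, b.2.1⟩ := by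
          rw [hTdel, sdiff_adj]
          refine ⟨g3, ?_⟩
          rw [fromEdgeSet_adj]
          rintro ⟨heq, -⟩
          rw [Set.mem_singleton_iff] at heq
          apply hne
          rw [Sym2.eq_iff] at heq ⊢
          rcases heq with ⟨e1, e2⟩ | ⟨e1, e2⟩
          · exact Or.inl ⟨Subtype.ext (Prod.ext_iff.mpr
              ⟨congrArg Subtype.val e1, g1.trans h1.symm⟩),
              Subtype.ext (Prod.ext_iff.mpr ⟨congrArg Subtype.val e2, g2.trans h2.symm⟩)⟩
          · exact Or.inr ⟨Subtype.ext (Prod.ext_iff.mpr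
              ⟨congrArg Subtype.val e1, g1.trans h2.symm⟩),
              Subtype.ext (Prod.ext_iff.mpr ⟨congrArg Subtype.val e2, g2.trans h1.symm⟩)⟩
        exact ⟨fun h => hadj'.symm.reachable.trans h, fun h => hadj'.reachable.trans h⟩
    · exact Reachable.refl _
    · intro hr
      exact hbr hr.symm

private lemma lex_key {V W : Type*} {G : SimpleGraph V} {H : SimpleGraph W} {s t : ℕ}
    (hG : IsOddMinorOf (⊤ : SimpleGraph (Fin s)) G)
    (hH : IsOddMinorOf (⊤ : SimpleGraph (Fin t)) H) :
    IsOddMinorOf (⊤ : SimpleGraph (Fin (s * t))) (lexProd G H) := by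
  classical
  obtain ⟨T, cG, hTtree, hTdisj, hTprop, hTedge⟩ := hG
  obtain ⟨S, cH, hStree, hSdisj, hSprop, hSedge⟩ := hH
  have hTne : ∀ i, Nonempty ↥(T i).verts := fun i => (hTtree i).isConnected.nonempty
  have hSne : ∀ j, Nonempty ↥(S j).verts := fun j => (hStree j).isConnected.nonempty
  let x0 : ∀ i, ↥(T i).verts := fun i => (hTne i).some
  let u0 : ∀ j, ↥(S j).verts := fun j => (hSne j).some
  let U : Fin s × Fin t → (lexProd G H).Subgraph := fun p =>
    boxSub G H (T p.1) (S p.2) (u0 p.2 : W) (u0 p.2).2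
  let c : V × W → Fin 2 := fun z => cG z.1 + cH z.2
  refine ⟨fun k => U (finProdFinEquiv.symm k), c, ?_, ?_, ?_, ?_⟩
  · intro k
    exact boxSub_isTree (hTtree _) (hStree _)
  · intro k k' hkk'
    have hpq : finProdFinEquiv.symm k ≠ finProdFinEquiv.symm k' :=
      fun h => hkk' (finProdFinEquiv.symm.injective h)
    set p := finProdFinEquiv.symm k
    set q := finProdFinEquiv.symm k'
    rw [Set.disjoint_left]
    rintro ⟨x, u⟩ ⟨hx1, hu1⟩ ⟨hx2, hu2⟩
    by_cases h1 : p.1 = q.1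
    · have h2 : p.2 ≠ q.2 := fun h => hpq (Prod.ext_iff.mpr ⟨h1, h⟩)
      exact (Set.disjoint_left.mp (hSdisj h2) hu1) hu2
    · exact (Set.disjoint_left.mp (hTdisj h1) hx1) hx2
  · intro k a b hab hc
    rcases hab with ⟨g1, g2, g3⟩ | ⟨g1, g2, g3⟩
    · refine hSprop _ _ _ g3 ?_
      have hc' : cG a.1 + cH a.2 = cG b.1 + cH b.2 := hc
      rw [g1] at hc'
      exact add_left_cancel hc'
    · refine hTprop _ _ _ g3 ?_
      have hc' : cG a.1 + cH a.2 = cG b.1 + cH b.2 := hc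
      rw [g1, g2] at hc'
      exact add_right_cancel hc'
  · intro k k' hkk'
    set p := finProdFinEquiv.symm k with hp
    set q := finProdFinEquiv.symm k' with hq
    have hpq : p ≠ q := fun h => hkk'.ne (finProdFinEquiv.symm.injective h)
    by_cases h1 : p.1 = q.1
    · have h2 : p.2 ≠ q.2 := fun h => hpq (Prod.ext_iff.mpr ⟨h1, h⟩)
      obtain ⟨a, b, ha, hb, hab, hcab⟩ := hSedge p.2 q.2 ((top_adj _ _).mpr h2)
      refine ⟨((x0 p.1 : V), a), ((x0 p.1 : V), b),
        ⟨(x0 p.1).2, ha⟩, ⟨by rw [← h1]; exact (x0 p.1).2, hb⟩,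
        Or.inr ⟨rfl, hab⟩, ?_⟩
      show cG (x0 p.1 : V) + cH a = cG (x0 p.1 : V) + cH b
      rw [hcab]
    · obtain ⟨x, y, hx, hy, hxy, hcxy⟩ := hTedge p.1 q.1 ((top_adj _ _).mpr h1)
      by_cases h2 : p.2 = q.2
      · refine ⟨(x, (u0 p.2 : W)), (y, (u0 p.2 : W)),
          ⟨hx, (u0 p.2).2⟩, ⟨hy, by rw [← h2]; exact (u0 p.2).2⟩, Or.inl hxy, ?_⟩
        show cG x + cH (u0 p.2 : W) = cG y + cH (u0 p.2 : W)
        rw [hcxy]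
      · obtain ⟨a, b, ha, hb, hab, hcab⟩ := hSedge p.2 q.2 ((top_adj _ _).mpr h2)
        refine ⟨(x, a), (y, b), ⟨hx, ha⟩, ⟨hy, hb⟩, Or.inl hxy, ?_⟩
        show cG x + cH a = cG y + cH b
        rw [hcxy, hcab]

private lemma oddMinor_card_le {V : Type*} [Fintype V] {G : SimpleGraph V} {r : ℕ}
    (h : IsOddMinorOf (⊤ : SimpleGraph (Fin r)) G) : r ≤ Fintype.card V := by
  obtain ⟨T, c, htree, hdisj, -, -⟩ := h
  have hne : ∀ k, Nonempty ↥(T k).verts := fun k => (htree k).isConnected.nonempty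
  have hinj : Function.Injective (fun k => ((hne k).some : V)) := by
    intro k k' h
    by_contra hkk'
    have h' : ((hne k).some : V) = ((hne k').some : V) := h
    refine Set.disjoint_left.mp (hdisj hkk') (hne k).some.2 ?_
    rw [h']
    exact (hne k').some.2
  calc r = Fintype.card (Fin r) := (Fintype.card_fin r).symm
    _ ≤ Fintype.card V := Fintype.card_le_of_injective _ hinj

private lemma zero_mem_oddMinor {V : Type*} (G : SimpleGraph V) :
    IsOddMinorOf (⊤ : SimpleGraph (Fin 0)) G :=
  ⟨fun k => k.elim0, fun _ => 0, fun k => k.elim0, by intro k; exact k.elim0,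
    fun k => k.elim0, fun k => k.elim0⟩

private lemma bddAbove_oddMinor {V : Type*} [Fintype V] (G : SimpleGraph V) :
    BddAbove {r : ℕ | IsOddMinorOf (⊤ : SimpleGraph (Fin r)) G} :=
  ⟨Fintype.card V, fun _ hr => oddMinor_card_le hr⟩

private lemma oddHadwiger_mem {V : Type*} [Fintype V] (G : SimpleGraph V) :
    IsOddMinorOf (⊤ : SimpleGraph (Fin (oddHadwiger G))) G :=
  Nat.sSup_mem ⟨0, zero_mem_oddMinor G⟩ (bddAbove_oddMinor G)

end AuxOddMinor

theorem stmt_4 {V W : Type*} [Fintype V] [Fintype W]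
    (G : SimpleGraph V) (H : SimpleGraph W) (s t : ℕ)
    (hs : oddHadwiger G = s) (hs2 : 2 ≤ s)
    (ht : oddHadwiger H = t) (ht2 : 2 ≤ t) :
    oddHadwiger (lexProd G H) ≥ s * t := by
  have h1 := oddHadwiger_mem G
  have h2 := oddHadwiger_mem H
  rw [hs] at h1
  rw [ht] at h2
  exact le_csSup (bddAbove_oddMinor _) (lex_key h1 h2)
end

section
/- For all integers d ≥ 1 and n ≥ 2, the odd Hadwiger number of the Hamming graph H_n^d (the Cartesian product of d copies of the complete graph K_n) satisfies oh(H_n^d) ≥ d(n − 2) + 2. -/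
open SimpleGraph

/-- The Hamming graph `H_n^d`: vertices are `d`-tuples over an `n`-element alphabet, two
tuples being adjacent iff they differ in exactly one coordinate.  This is the Cartesian
product of `d` copies of `K_n`. -/
def hamming (d n : ℕ) : SimpleGraph (Fin d → Fin n) where
  Adj x y := x ≠ y ∧ ∀ i j, x i ≠ y i → x j ≠ y j → i = j
  symm := by
    constructor
    rintro x y ⟨h1, h2⟩
    exact ⟨h1.symm, fun i j hi hj => h2 i j hi.symm hj.symm⟩
  loopless := by
    constructor
    rintro x ⟨h1, _⟩
    exact h1 rfl


lemma star_isTree {α : Type*} (H : SimpleGraph α) (c : α)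
    (h1 : ∀ v, v ≠ c → H.Adj c v) (h2 : ∀ ⦃x y⦄, H.Adj x y → x = c ∨ y = c) :
    H.IsTree := by
  haveI := Classical.decEq α
  constructor
  · haveI : Nonempty α := ⟨c⟩
    refine ⟨fun u v => ?_⟩
    have reach : ∀ w, H.Reachable w c := by
      intro w
      by_cases h : w = c
      · subst h; exact Reachable.refl w
      · exact ((h1 w h).symm).reachable
    exact (reach u).trans (reach v).symm
  · intro v p hp
    have hc : c ∈ p.support := by
      cases p with
      | nil => exact absurd rfl hp.ne_nil
      | cons h q =>
        rcases h2 h with rfl | rfl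
        · exact Walk.start_mem_support _
        · exact List.mem_cons_of_mem _ (Walk.start_mem_support q)
    have hp' := hp.rotate hc
    set p' := p.rotate c hc with hp'def
    have h3 := hp'.three_le_length
    clear_value p'
    clear hp'def hp hc p
    match p' with
    | .nil => simp at h3
    | .cons h q =>
      match q with
      | .nil => exact h.ne rfl
      | .cons h' q' =>
        rename_i l x
        have hl : l ≠ c := h.ne'
        have hx : x = c := (h2 h').resolve_left hl
        subst hx
        have hnodup := hp'.2
        rw [Walk.support_cons, List.tail_cons, Walk.support_cons] at hnodup
        cases q' with
        | nil => simp at h3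
        | cons h'' q'' =>
          rw [Walk.support_cons, List.nodup_cons, List.nodup_cons] at hnodup
          exact hnodup.2.1 (q''.end_mem_support)

/-- star subgraph -/
def starSub {V : Type*} (G : SimpleGraph V) (c : V) (L : Set V)
    (hL : ∀ v ∈ L, G.Adj c v) : G.Subgraph where
  verts := insert c L
  Adj x y := (x = c ∧ y ∈ L) ∨ (y = c ∧ x ∈ L)
  adj_sub := by
    rintro x y (⟨rfl, hy⟩ | ⟨rfl, hx⟩)
    · exact hL _ hy
    · exact (hL _ hx).symm
  edge_vert := by
    rintro x y (⟨rfl, hy⟩ | ⟨rfl, hx⟩)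
    · exact Set.mem_insert _ _
    · exact Set.mem_insert_iff.2 (Or.inr hx)
  symm := by
    constructor
    rintro x y (⟨h1, h2⟩ | ⟨h1, h2⟩)
    exacts [Or.inr ⟨h1, h2⟩, Or.inl ⟨h1, h2⟩]

lemma starSub_verts {V : Type*} (G : SimpleGraph V) (c : V) (L : Set V) (hL) :
    (starSub G c L hL).verts = insert c L := rfl

lemma starSub_isTree {V : Type*} (G : SimpleGraph V) (c : V) (L : Set V) (hL) :
    (starSub G c L hL).coe.IsTree := by
  apply star_isTree _ (⟨c, Set.mem_insert _ _⟩ : ↥(starSub G c L hL).verts)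
  · rintro ⟨v, hv⟩ hne
    have hv' : v ∈ L := by
      rcases Set.mem_insert_iff.1 hv with rfl | h
      · exact absurd (Subtype.ext rfl) hne
      · exact h
    exact Or.inl ⟨rfl, hv'⟩
  · rintro ⟨x, hx⟩ ⟨y, hy⟩ hadj
    rcases hadj with ⟨h1, _⟩ | ⟨h1, _⟩
    · exact Or.inl (Subtype.ext h1)
    · exact Or.inr (Subtype.ext h1)

/-- transfer along equiv -/
lemma isOddMinorOf_of_equiv {W W' V : Type*} (G : SimpleGraph V) (e : W' ≃ W)
    (h : IsOddMinorOf (⊤ : SimpleGraph W) G) : IsOddMinorOf (⊤ : SimpleGraph W') G := by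
  obtain ⟨T, c, h1, h2, h3, h4⟩ := h
  refine ⟨fun w => T (e w), c, fun w => h1 _, fun w w' hne => h2 (e.injective.ne hne),
    fun w => h3 (e w), fun w w' hadj => h4 _ _ ?_⟩
  simp only [top_adj] at hadj ⊢
  exact e.injective.ne hadj

lemma oddMinor_card_bound {V : Type*} [Fintype V] (G : SimpleGraph V) {r : ℕ}
    (h : IsOddMinorOf (⊤ : SimpleGraph (Fin r)) G) : r ≤ Fintype.card V := by
  obtain ⟨T, c, h1, h2, -, -⟩ := h
  have hne : ∀ w : Fin r, ∃ x, x ∈ (T w).verts := by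
    intro w
    have := (h1 w).isConnected.nonempty
    obtain ⟨⟨x, hx⟩⟩ := this
    exact ⟨x, hx⟩
  choose f hf using hne
  have hinj : Function.Injective f := by
    intro w w' he
    by_contra hne'
    exact Set.disjoint_left.mp (h2 hne') (hf w) (he ▸ hf w')
  simpa using Fintype.card_le_of_injective f hinj

section Constr

variable {d n : ℕ}

def fz (hn : 2 ≤ n) : Fin n := ⟨0, by omega⟩
def fo (hn : 2 ≤ n) : Fin n := ⟨1, by omega⟩
def fa (k : Fin (n - 2)) : Fin n := ⟨k.1 + 2, by have := k.2; omega⟩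

lemma fa_ne_fz (hn : 2 ≤ n) (k : Fin (n-2)) : fa k ≠ fz hn := by
  simp [fa, fz, Fin.ext_iff]
lemma fo_ne_fz (hn : 2 ≤ n) : fo hn ≠ fz hn := by
  simp [fo, fz, Fin.ext_iff]
lemma fa_ne_fo (hn : 2 ≤ n) (k : Fin (n-2)) : fa k ≠ fo hn := by
  simp [fa, fo, Fin.ext_iff]

def v1 (z : Fin n) (i : Fin d) (a : Fin n) : Fin d → Fin n :=
  fun m => if m = i then a else z

def v2 (z : Fin n) (i : Fin d) (a : Fin n) (j : Fin d) (b : Fin n) : Fin d → Fin n :=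
  fun m => if m = i then a else if m = j then b else z

@[simp] lemma v1_self (z : Fin n) (i : Fin d) (a : Fin n) : v1 z i a i = a := by simp [v1]
lemma v1_other (z : Fin n) {i m : Fin d} (a : Fin n) (h : m ≠ i) : v1 z i a m = z := by
  simp [v1, h]
@[simp] lemma v2_fst (z : Fin n) (i : Fin d) (a : Fin n) (j : Fin d) (b : Fin n) :
    v2 z i a j b i = a := by simp [v2]
lemma v2_snd (z : Fin n) {i j : Fin d} (a b : Fin n) (h : j ≠ i) : v2 z i a j b j = by
  exact b := by simp [v2, h]
lemma v2_other (z : Fin n) {i j m : Fin d} (a b : Fin n) (h1 : m ≠ i) (h2 : m ≠ j) :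
    v2 z i a j b m = z := by simp [v2, h1, h2]

lemma ham_adj {x y : Fin d → Fin n} (i : Fin d) (hne : x i ≠ y i)
    (h : ∀ j, j ≠ i → x j = y j) : (hamming d n).Adj x y := by
  refine ⟨fun he => hne (congrFun he i), fun i' j' hi' hj' => ?_⟩
  have e1 : i' = i := by
    by_contra hc
    exact hi' (h i' hc)
  have e2 : j' = i := by
    by_contra hc
    exact hj' (h j' hc)
  rw [e1, e2]

open Classical in
noncomputable def col (z : Fin n) (x : Fin d → Fin n) : Fin 2 :=
  if ∃ i j : Fin d, i ≠ j ∧ x i ≠ z ∧ x j ≠ z then 0 else 1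

lemma col_one (z : Fin n) (x : Fin d → Fin n)
    (h : ∀ i j : Fin d, x i ≠ z → x j ≠ z → i = j) : col z x = 1 := by
  rw [col, if_neg]
  rintro ⟨i, j, hij, hi, hj⟩
  exact hij (h i j hi hj)

lemma col_zero (z : Fin n) (x : Fin d → Fin n) {i j : Fin d} (hij : i ≠ j)
    (hi : x i ≠ z) (hj : x j ≠ z) : col z x = 0 := by
  rw [col, if_pos ⟨i, j, hij, hi, hj⟩]

abbrev Wt (d n : ℕ) := (Fin d × Fin (n - 2)) ⊕ Fin 2

def ctr (hn : 2 ≤ n) (hd : 1 ≤ d) : Wt d n → (Fin d → Fin n)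
  | .inl p => v1 (fz hn) p.1 (fa p.2)
  | .inr t => if t = 0 then (fun _ => fz hn) else v1 (fz hn) ⟨0, hd⟩ (fo hn)

def lvs (hn : 2 ≤ n) (hd : 1 ≤ d) : Wt d n → Set (Fin d → Fin n)
  | .inl p => {x | (∃ j, p.1 < j ∧ ∃ b : Fin n, 2 ≤ b.1 ∧ x = v2 (fz hn) p.1 (fa p.2) j b) ∨
      (∃ j, j < p.1 ∧ x = v2 (fz hn) p.1 (fa p.2) j (fo hn))}
  | .inr t => if t = 0 then ∅ else
      {x | ∃ i, i ≠ ⟨0, hd⟩ ∧ x = v2 (fz hn) ⟨0, hd⟩ (fo hn) i (fo hn)}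

lemma lvs_adj (hn : 2 ≤ n) (hd : 1 ≤ d) (w : Wt d n) :
    ∀ x ∈ lvs hn hd w, (hamming d n).Adj (ctr hn hd w) x := by
  intro x hx
  match w with
  | .inl ⟨i, k⟩ =>
    rcases hx with ⟨j, hij, b, hb, rfl⟩ | ⟨j, hji, rfl⟩
    · have hji : j ≠ i := fun h => absurd (h ▸ hij) (lt_irrefl _)
      refine ham_adj j ?_ ?_
      · simp only [ctr, v1, v2, if_neg hji]
        simp [fz, Fin.ext_iff]
        omega
      · intro m hm
        simp only [ctr, v1, v2]
        by_cases hmi : m = i <;> simp [hmi, hm]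
    · have hji : j ≠ i := fun h => absurd (h ▸ hji) (lt_irrefl _)
      refine ham_adj j ?_ ?_
      · simp only [ctr, v1, v2, if_neg hji]
        exact (fo_ne_fz hn).symm
      · intro m hm
        simp only [ctr, v1, v2]
        by_cases hmi : m = i <;> simp [hmi, hm]
  | .inr ⟨0, _⟩ =>
    simp [lvs, Fin.ext_iff] at hx
  | .inr ⟨1, _⟩ =>
    rw [lvs] at hx
    rw [if_neg (by simp [Fin.ext_iff])] at hx
    obtain ⟨i, hi0, rfl⟩ := hx
    refine ham_adj i ?_ ?_
    · simp only [ctr, if_neg (show (⟨1,by omega⟩ : Fin 2) ≠ 0 by simp [Fin.ext_iff]), v1, v2,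
        if_neg hi0]
      exact (fo_ne_fz hn).symm
    · intro m hm
      simp only [ctr, if_neg (show (⟨1,by omega⟩ : Fin 2) ≠ 0 by simp [Fin.ext_iff]), v1, v2]
      by_cases hmi : m = (⟨0, hd⟩ : Fin d) <;> simp [hmi, hm]

lemma fin2_one_ne_zero : (⟨1, by omega⟩ : Fin 2) ≠ 0 := by simp [Fin.ext_iff]

lemma col_ctr (hn : 2 ≤ n) (hd : 1 ≤ d) (w : Wt d n) : col (fz hn) (ctr hn hd w) = 1 := by
  match w with
  | .inl ⟨i, k⟩ =>
    refine col_one _ _ fun i' j' hi' hj' => ?_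
    have e1 : i' = i := by by_contra hc; exact hi' (by simp [ctr, v1, hc])
    have e2 : j' = i := by by_contra hc; exact hj' (by simp [ctr, v1, hc])
    rw [e1, e2]
  | .inr t =>
    refine col_one _ _ fun i' j' hi' hj' => ?_
    by_cases ht : t = 0
    · exact absurd (by simp [ctr, ht] : ctr hn hd (Sum.inr t) i' = fz hn) hi'
    · have e1 : i' = ⟨0, hd⟩ := by by_contra hc; exact hi' (by simp [ctr, ht, v1, hc])
      have e2 : j' = ⟨0, hd⟩ := by by_contra hc; exact hj' (by simp [ctr, ht, v1, hc])
      rw [e1, e2]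

lemma col_lvs (hn : 2 ≤ n) (hd : 1 ≤ d) (w : Wt d n) :
    ∀ x ∈ lvs hn hd w, col (fz hn) x = 0 := by
  intro x hx
  match w with
  | .inl ⟨i, k⟩ =>
    rcases hx with ⟨j, hij, b, hb, rfl⟩ | ⟨j, hji, rfl⟩
    · have hji : j ≠ i := fun h => absurd (h ▸ hij) (lt_irrefl _)
      refine col_zero _ _ (Ne.symm hji) ?_ ?_
      · rw [v2_fst]; exact fa_ne_fz hn k
      · rw [v2_snd _ _ _ hji]; simp [fz, Fin.ext_iff]; omega
    · have hji : j ≠ i := fun h => absurd (h ▸ hji) (lt_irrefl _)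
      refine col_zero _ _ (Ne.symm hji) ?_ ?_
      · rw [v2_fst]; exact fa_ne_fz hn k
      · rw [v2_snd _ _ _ hji]; exact fo_ne_fz hn
  | .inr ⟨0, _⟩ => simp [lvs, Fin.ext_iff] at hx
  | .inr ⟨1, _⟩ =>
    rw [lvs, if_neg fin2_one_ne_zero] at hx
    obtain ⟨i, hi0, rfl⟩ := hx
    refine col_zero _ _ (Ne.symm hi0) ?_ ?_
    · rw [v2_fst]; exact fo_ne_fz hn
    · rw [v2_snd _ _ _ hi0]; exact fo_ne_fz hn

lemma mem_inl_inv (hn : 2 ≤ n) (hd : 1 ≤ d) {i : Fin d} {k : Fin (n-2)} {x : Fin d → Fin n}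
    (hx : x ∈ insert (ctr hn hd (.inl (i,k))) (lvs hn hd (.inl (i,k)))) :
    x i = fa k ∧ ∀ m, m < i → (x m).1 ≤ 1 := by
  rcases hx with rfl | hx
  · refine ⟨by simp [ctr], fun m hm => ?_⟩
    have : m ≠ i := fun h => absurd (h ▸ hm) (lt_irrefl _)
    simp [ctr, v1, this, fz]
  · rcases hx with ⟨j, hij, b, hb, rfl⟩ | ⟨j, hji, rfl⟩
    · refine ⟨v2_fst _ _ _ _ _, fun m hm => ?_⟩
      have h1 : m ≠ i := fun h => absurd (h ▸ hm) (lt_irrefl _)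
      have h2 : m ≠ j := fun h => absurd (h ▸ (hm.trans hij)) (lt_irrefl _)
      rw [v2_other _ _ _ h1 h2]; simp [fz]
    · refine ⟨v2_fst _ _ _ _ _, fun m hm => ?_⟩
      have h1 : m ≠ i := fun h => absurd (h ▸ hm) (lt_irrefl _)
      by_cases h2 : m = j
      · subst h2; rw [v2_snd _ _ _ (fun h => absurd (h ▸ hji) (lt_irrefl _))]; simp [fo]
      · rw [v2_other _ _ _ h1 h2]; simp [fz]

lemma mem_inr_inv (hn : 2 ≤ n) (hd : 1 ≤ d) {t : Fin 2} {x : Fin d → Fin n}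
    (hx : x ∈ insert (ctr hn hd (.inr t)) (lvs hn hd (.inr t))) :
    ∀ m, (x m).1 ≤ 1 := by
  intro m
  by_cases ht : t = 0
  · subst ht
    rcases hx with rfl | hx
    · simp [ctr, fz]
    · simp [lvs, Fin.ext_iff] at hx
  · rcases hx with rfl | hx
    · simp only [ctr, if_neg ht, v1]
      split <;> simp [fo, fz]
    · rw [lvs, if_neg ht] at hx
      obtain ⟨i, hi0, rfl⟩ := hx
      simp only [v2]
      split
      · simp [fo]
      · split <;> simp [fo, fz]

lemma mem_inr0_inv (hn : 2 ≤ n) (hd : 1 ≤ d) {x : Fin d → Fin n}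
    (hx : x ∈ insert (ctr hn hd (.inr 0)) (lvs hn hd (.inr 0))) :
    x = fun _ => fz hn := by
  rcases hx with rfl | hx
  · simp [ctr]
  · simp [lvs, Fin.ext_iff] at hx

lemma mem_inr1_inv (hn : 2 ≤ n) (hd : 1 ≤ d) {t : Fin 2} (ht : t ≠ 0) {x : Fin d → Fin n}
    (hx : x ∈ insert (ctr hn hd (.inr t)) (lvs hn hd (.inr t))) :
    x ⟨0, hd⟩ = fo hn := by
  rcases hx with rfl | hx
  · simp [ctr, if_neg ht]
  · rw [lvs, if_neg ht] at hx
    obtain ⟨i, hi0, rfl⟩ := hx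
    exact v2_fst _ _ _ _ _

lemma verts_disjoint (hn : 2 ≤ n) (hd : 1 ≤ d) :
    Pairwise fun w w' : Wt d n =>
      Disjoint (insert (ctr hn hd w) (lvs hn hd w)) (insert (ctr hn hd w') (lvs hn hd w')) := by
  intro w w' hne
  rw [Set.disjoint_left]
  intro x hx hx'
  match w, w' with
  | .inl ⟨i, k⟩, .inl ⟨i', k'⟩ =>
    obtain ⟨e1, f1⟩ := mem_inl_inv hn hd hx
    obtain ⟨e2, f2⟩ := mem_inl_inv hn hd hx'
    rcases lt_trichotomy i i' with h | h | h
    · have := f2 i h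
      rw [e1] at this
      simp [fa] at this
    · subst h
      have : k = k' := by
        have := e1.symm.trans e2
        simpa [fa, Fin.ext_iff] using this
      exact hne (by rw [this])
    · have := f1 i' h
      rw [e2] at this
      simp [fa] at this
  | .inl ⟨i, k⟩, .inr t =>
    have := mem_inr_inv hn hd hx' i
    rw [(mem_inl_inv hn hd hx).1] at this
    simp [fa] at this
  | .inr t, .inl ⟨i, k⟩ =>
    have := mem_inr_inv hn hd hx i
    rw [(mem_inl_inv hn hd hx').1] at this
    simp [fa] at this
  | .inr t, .inr t' =>
    have htt : t ≠ t' := fun h => hne (by rw [h])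
    by_cases ht : t = 0
    · subst ht
      have h1 := mem_inr0_inv hn hd hx
      have h2 := mem_inr1_inv hn hd (Ne.symm htt) hx'
      rw [h1] at h2
      exact fo_ne_fz hn h2.symm
    · by_cases ht' : t' = 0
      · subst ht'
        have h1 := mem_inr0_inv hn hd hx'
        have h2 := mem_inr1_inv hn hd ht hx
        rw [h1] at h2
        exact fo_ne_fz hn h2.symm
      · exact htt (by omega)

def Tch (hn : 2 ≤ n) (hd : 1 ≤ d) (w w' : Wt d n) : Prop :=
  ∃ x y, x ∈ insert (ctr hn hd w) (lvs hn hd w) ∧ y ∈ insert (ctr hn hd w') (lvs hn hd w') ∧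
    (hamming d n).Adj x y ∧ col (fz hn) x = col (fz hn) y

lemma tch_symm {hn : 2 ≤ n} {hd : 1 ≤ d} {w w' : Wt d n} (h : Tch hn hd w w') :
    Tch hn hd w' w := by
  obtain ⟨x, y, hx, hy, hadj, hc⟩ := h
  exact ⟨y, x, hy, hx, hadj.symm, hc.symm⟩

lemma tch_inl_inl_ne (hn : 2 ≤ n) (hd : 1 ≤ d) (i : Fin d) {k k' : Fin (n-2)} (h : k ≠ k') :
    Tch hn hd (.inl (i,k)) (.inl (i,k')) := by
  refine ⟨ctr hn hd (.inl (i,k)), ctr hn hd (.inl (i,k')), Set.mem_insert _ _,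
    Set.mem_insert _ _, ?_, by rw [col_ctr, col_ctr]⟩
  refine ham_adj i ?_ ?_
  · simp only [ctr, v1_self]
    simp [fa, Fin.ext_iff]
    intro hc
    exact h (Fin.ext hc)
  · intro m hm
    simp [ctr, v1, hm]

lemma tch_inl_inl_lt (hn : 2 ≤ n) (hd : 1 ≤ d) {i i' : Fin d} (k : Fin (n-2)) (k' : Fin (n-2))
    (h : i < i') : Tch hn hd (.inl (i,k)) (.inl (i',k')) := by
  have hne : i' ≠ i := fun e => absurd (e ▸ h) (lt_irrefl _)
  have hne' : i ≠ i' := Ne.symm hne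
  refine ⟨v2 (fz hn) i (fa k) i' (fa k'), v2 (fz hn) i' (fa k') i (fo hn),
    Set.mem_insert_iff.2 (Or.inr (Or.inl ⟨i', h, fa k', by simp [fa], rfl⟩)),
    Set.mem_insert_iff.2 (Or.inr (Or.inr ⟨i, h, rfl⟩)), ?_, ?_⟩
  · refine ham_adj i ?_ ?_
    · rw [v2_fst, v2_snd _ _ _ hne']
      exact fa_ne_fo hn k
    · intro m hm
      by_cases hmi : m = i'
      · subst hmi; rw [v2_snd _ _ _ hne, v2_fst]
      · rw [v2_other _ _ _ hm hmi, v2_other _ _ _ hmi hm]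
  · rw [col_zero _ _ hne' (by rw [v2_fst]; exact fa_ne_fz hn k)
        (by rw [v2_snd _ _ _ hne]; exact fa_ne_fz hn k'),
      col_zero _ _ hne (by rw [v2_fst]; exact fa_ne_fz hn k')
        (by rw [v2_snd _ _ _ hne']; exact fo_ne_fz hn)]

lemma tch_inr0_inl (hn : 2 ≤ n) (hd : 1 ≤ d) (i : Fin d) (k : Fin (n-2)) :
    Tch hn hd (.inr 0) (.inl (i,k)) := by
  refine ⟨ctr hn hd (.inr 0), ctr hn hd (.inl (i,k)), Set.mem_insert _ _,
    Set.mem_insert _ _, ?_, by rw [col_ctr, col_ctr]⟩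
  refine ham_adj i ?_ ?_
  · simp only [ctr, if_pos rfl, v1_self]
    exact (fa_ne_fz hn k).symm
  · intro m hm
    simp [ctr, v1, hm]

lemma tch_inr0_inr1 (hn : 2 ≤ n) (hd : 1 ≤ d) {t : Fin 2} (ht : t ≠ 0) :
    Tch hn hd (.inr 0) (.inr t) := by
  refine ⟨ctr hn hd (.inr 0), ctr hn hd (.inr t), Set.mem_insert _ _,
    Set.mem_insert _ _, ?_, by rw [col_ctr, col_ctr]⟩
  refine ham_adj ⟨0, hd⟩ ?_ ?_
  · simp only [ctr, if_pos rfl, if_neg ht, v1_self]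
    exact (fo_ne_fz hn).symm
  · intro m hm
    simp [ctr, if_neg ht, v1, hm]

lemma tch_inr1_inl (hn : 2 ≤ n) (hd : 1 ≤ d) {t : Fin 2} (ht : t ≠ 0) (i : Fin d)
    (k : Fin (n-2)) : Tch hn hd (.inr t) (.inl (i,k)) := by
  by_cases hi : i = ⟨0, hd⟩
  · subst hi
    refine ⟨ctr hn hd (.inr t), ctr hn hd (.inl (⟨0, hd⟩,k)), Set.mem_insert _ _,
      Set.mem_insert _ _, ?_, by rw [col_ctr, col_ctr]⟩
    refine ham_adj ⟨0, hd⟩ ?_ ?_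
    · simp only [ctr, if_neg ht, v1_self]
      exact (fa_ne_fo hn k).symm
    · intro m hm
      simp [ctr, if_neg ht, v1, hm]
  · have h0i : (⟨0, hd⟩ : Fin d) < i := by
      rw [Fin.lt_def]
      have hv : i.1 ≠ 0 := fun hv => hi (Fin.ext hv)
      simpa using Nat.pos_of_ne_zero hv
    have hi0 : i ≠ ⟨0, hd⟩ := hi
    have h0i' : (⟨0, hd⟩ : Fin d) ≠ i := Ne.symm hi
    refine ⟨v2 (fz hn) ⟨0, hd⟩ (fo hn) i (fo hn), v2 (fz hn) i (fa k) ⟨0, hd⟩ (fo hn),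
      Set.mem_insert_iff.2 (Or.inr (by rw [lvs, if_neg ht]; exact ⟨i, hi0, rfl⟩)),
      Set.mem_insert_iff.2 (Or.inr (Or.inr ⟨⟨0, hd⟩, h0i, rfl⟩)), ?_, ?_⟩
    · refine ham_adj i ?_ ?_
      · rw [v2_snd _ _ _ hi0, v2_fst]
        exact fa_ne_fo hn k |>.symm
      · intro m hm
        by_cases hm0 : m = ⟨0, hd⟩
        · subst hm0; rw [v2_fst, v2_snd _ _ _ h0i']
        · rw [v2_other _ _ _ hm0 hm, v2_other _ _ _ hm hm0]
    · rw [col_zero _ _ h0i' (by rw [v2_fst]; exact fo_ne_fz hn)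
          (by rw [v2_snd _ _ _ hi0]; exact fo_ne_fz hn),
        col_zero _ _ hi0 (by rw [v2_fst]; exact fa_ne_fz hn k)
          (by rw [v2_snd _ _ _ h0i']; exact fo_ne_fz hn)]

lemma tch_all (hn : 2 ≤ n) (hd : 1 ≤ d) (w w' : Wt d n) (hne : w ≠ w') : Tch hn hd w w' := by
  match w, w' with
  | .inl ⟨i, k⟩, .inl ⟨i', k'⟩ =>
    rcases lt_trichotomy i i' with h | h | h
    · exact tch_inl_inl_lt hn hd k k' h
    · subst h
      have hk : k ≠ k' := fun e => hne (by rw [e])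
      exact tch_inl_inl_ne hn hd i hk
    · exact tch_symm (tch_inl_inl_lt hn hd k' k h)
  | .inl ⟨i, k⟩, .inr t =>
    by_cases ht : t = 0
    · subst ht; exact tch_symm (tch_inr0_inl hn hd i k)
    · exact tch_symm (tch_inr1_inl hn hd ht i k)
  | .inr t, .inl ⟨i, k⟩ =>
    by_cases ht : t = 0
    · subst ht; exact tch_inr0_inl hn hd i k
    · exact tch_inr1_inl hn hd ht i k
  | .inr t, .inr t' =>
    have htt : t ≠ t' := fun h => hne (by rw [h])
    by_cases ht : t = 0
    · subst ht; exact tch_inr0_inr1 hn hd (Ne.symm htt)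
    · by_cases ht' : t' = 0
      · subst ht'; exact tch_symm (tch_inr0_inr1 hn hd ht)
      · exact absurd (by omega : t = t') htt

end Constr

theorem stmt_8 (d n : ℕ) (hd : 1 ≤ d) (hn : 2 ≤ n) :
    oddHadwiger (hamming d n) ≥ d * (n - 2) + 2 := by
  have key : IsOddMinorOf (⊤ : SimpleGraph (Wt d n)) (hamming d n) := by
    refine ⟨fun w => starSub (hamming d n) (ctr hn hd w) (lvs hn hd w) (lvs_adj hn hd w),
      col (fz hn), fun w => starSub_isTree _ _ _ _, ?_, ?_, ?_⟩
    · exact verts_disjoint hn hd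
    · intro w x y hxy
      rcases hxy with ⟨rfl, hy⟩ | ⟨rfl, hx⟩
      · rw [col_ctr, col_lvs hn hd w _ hy]
        exact one_ne_zero
      · rw [col_lvs hn hd w _ hx, col_ctr]
        exact zero_ne_one
    · intro w w' hadj
      rw [top_adj] at hadj
      exact tch_all hn hd w w' hadj
  have hcard : Fintype.card (Wt d n) = d * (n - 2) + 2 := by
    simp [Wt]
  have key2 : IsOddMinorOf (⊤ : SimpleGraph (Fin (d * (n - 2) + 2))) (hamming d n) :=
    isOddMinorOf_of_equiv _ ((finCongr hcard.symm).trans (Fintype.equivFin (Wt d n)).symm) key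
  have hbdd : BddAbove {r : ℕ | IsOddMinorOf (⊤ : SimpleGraph (Fin r)) (hamming d n)} :=
    ⟨Fintype.card (Fin d → Fin n), fun r hr => oddMinor_card_bound _ hr⟩
  rw [oddHadwiger, ge_iff_le]
  exact le_csSup hbdd key2
end
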